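/- Let 3 ≤ m ≤ n and n ≡ -1 (mod m). Then every bipartite graph of girth at least 6 in which one bipartition class S has all degrees n and the other class L has all degrees m satisfies |S| + |L| ≥ (n/m + 1)(n+1)(m-1). -/

import Mathlib

open SimpleGraph Finset

lemma no4cycle' {V : Type*} (Γ : SimpleGraph V) (hg : 6 ≤ Γ.girth)
    {u s l l' : V} (h1 : Γ.Adj u l) (h2 : Γ.Adj l s) (h3 : Γ.Adj s l') (h4 : Γ.Adj l' u)
    (hus : u ≠ s) (hll : l ≠ l') : False := by
  let w : Γ.Walk u u := .cons h1 (.cons h2 (.cons h3 (.cons h4 .nil)))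
  have hcyc : w.IsCycle := by
    have e1 := h1.ne; have e2 := h2.ne; have e3 := h3.ne; have e4 := h4.ne
    simp [w, Walk.isCycle_def, Walk.isTrail_def, List.Nodup]
    tauto
  have hle : Γ.egirth ≤ (w.length : ℕ∞) := by
    rw [SimpleGraph.egirth]
    exact iInf_le_of_le u (iInf_le_of_le w (iInf_le_of_le hcyc le_rfl))
  have : Γ.girth ≤ 4 := by
    have := ENat.toNat_le_toNat hle (by simp [w])
    simpa [w, SimpleGraph.girth] using this
  omega

theorem stmt2 {V : Type*} [Fintype V] (Γ : SimpleGraph V) [DecidableRel Γ.Adj]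
    (S L : Finset V) (m n : ℕ) (hm : 3 ≤ m) (hmn : m ≤ n) (hmod : m ∣ n + 1)
    (hpart : ∀ v : V, v ∈ S ↔ v ∉ L)
    (hbip : ∀ ⦃u v : V⦄, Γ.Adj u v → (u ∈ S ∧ v ∈ L) ∨ (u ∈ L ∧ v ∈ S))
    (hS : ∀ v ∈ S, Γ.degree v = n)
    (hL : ∀ v ∈ L, Γ.degree v = m)
    (hgirth : 6 ≤ Γ.girth) :
    (n + m) * (n + 1) * (m - 1) ≤ (S.card + L.card) * m := by
  classical
  -- basic consequences of bipartiteness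
  have hSL : ∀ ⦃u v : V⦄, Γ.Adj u v → u ∈ S → v ∈ L := by
    intro u v h hu
    rcases hbip h with ⟨_, h2⟩ | ⟨h1, _⟩
    · exact h2
    · exact absurd h1 ((hpart u).mp hu)
  have hLS : ∀ ⦃u v : V⦄, Γ.Adj u v → u ∈ L → v ∈ S := by
    intro u v h hu
    rcases hbip h with ⟨h1, _⟩ | ⟨_, h2⟩
    · exact absurd hu ((hpart u).mp h1)
    · exact h2
  -- there is an edge, hence a vertex in S
  have hedge : ∃ u ∈ S, True := by
    have hnac : ¬ Γ.IsAcyclic := by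
      intro h
      rw [h.girth_eq_zero] at hgirth; omega
    obtain ⟨a, w, hw, -⟩ := (SimpleGraph.exists_girth_eq_length).mpr hnac
    cases w with
    | nil => exact absurd rfl hw.ne_nil
    | cons h p =>
      rcases hbip h with ⟨h1, _⟩ | ⟨_, h2⟩
      · exact ⟨a, h1, trivial⟩
      · exact ⟨_, h2, trivial⟩
  obtain ⟨u, hu, -⟩ := hedge
  -- edge count : |S| * n = |L| * m
  have hcount : S.card * n = L.card * m := by
    have h1 : (S.sigma fun v => Γ.neighborFinset v).card = S.card * n := by
      rw [Finset.card_sigma]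
      calc ∑ v ∈ S, (Γ.neighborFinset v).card = ∑ v ∈ S, n :=
            Finset.sum_congr rfl fun v hv => by
              rw [SimpleGraph.card_neighborFinset_eq_degree, hS v hv]
        _ = S.card * n := by rw [Finset.sum_const, smul_eq_mul]
    have h2 : (L.sigma fun v => Γ.neighborFinset v).card = L.card * m := by
      rw [Finset.card_sigma]
      calc ∑ v ∈ L, (Γ.neighborFinset v).card = ∑ v ∈ L, m :=
            Finset.sum_congr rfl fun v hv => by
              rw [SimpleGraph.card_neighborFinset_eq_degree, hL v hv]
        _ = L.card * m := by rw [Finset.sum_const, smul_eq_mul]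
    rw [← h1, ← h2]
    apply Finset.card_bij (fun p _ => ⟨p.2, p.1⟩)
    · rintro ⟨a, b⟩ hp
      simp only [Finset.mem_sigma, SimpleGraph.mem_neighborFinset] at hp ⊢
      exact ⟨hSL hp.2 hp.1, hp.2.symm⟩
    · rintro ⟨a, b⟩ _ ⟨c, d⟩ _ h
      simp only [Sigma.mk.inj_iff, heq_eq_eq] at h ⊢
      exact ⟨h.2, h.1⟩
    · rintro ⟨a, b⟩ hp
      simp only [Finset.mem_sigma, SimpleGraph.mem_neighborFinset] at hp
      exact ⟨⟨b, a⟩, by simp [Finset.mem_sigma, SimpleGraph.mem_neighborFinset, hLS hp.2 hp.1, hp.2.symm], rfl⟩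
  -- tree bound : n * (m-1) + 1 ≤ |S|
  have htree : n * (m - 1) + 1 ≤ S.card := by
    have hcard : ((Γ.neighborFinset u).sigma fun l => (Γ.neighborFinset l).erase u).card
        = n * (m - 1) := by
      rw [Finset.card_sigma]
      calc ∑ l ∈ Γ.neighborFinset u, ((Γ.neighborFinset l).erase u).card
          = ∑ l ∈ Γ.neighborFinset u, (m - 1) := by
            refine Finset.sum_congr rfl fun l hl => ?_
            rw [SimpleGraph.mem_neighborFinset] at hl
            rw [Finset.card_erase_of_mem (by
                  simpa [SimpleGraph.mem_neighborFinset] using hl.symm),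
              SimpleGraph.card_neighborFinset_eq_degree, hL l (hSL hl hu)]
        _ = n * (m - 1) := by
            rw [Finset.sum_const, smul_eq_mul, SimpleGraph.card_neighborFinset_eq_degree, hS u hu]
    have hinj : ((Γ.neighborFinset u).sigma fun l => (Γ.neighborFinset l).erase u).card
        ≤ (S.erase u).card := by
      apply Finset.card_le_card_of_injOn (fun p => p.2)
      · rintro ⟨a, b⟩ hp
        simp only [Finset.mem_coe, Finset.mem_sigma, Finset.mem_erase, SimpleGraph.mem_neighborFinset] at hp
        exact Finset.mem_erase.mpr ⟨hp.2.1, hLS hp.2.2 (hSL hp.1 hu)⟩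
      · rintro ⟨a, b⟩ ha ⟨c, d⟩ hc h
        simp only [Finset.mem_coe, Finset.mem_sigma, Finset.mem_erase,
          SimpleGraph.mem_neighborFinset] at ha hc
        dsimp at h
        subst h
        by_cases hac : a = c
        · subst hac; rfl
        · exact (no4cycle' Γ hgirth ha.1 ha.2.2 hc.2.2.symm hc.1.symm
            (Ne.symm ha.2.1) hac).elim
    rw [hcard] at hinj
    have := Finset.card_erase_of_mem hu ▸ hinj
    have hpos : 0 < S.card := Finset.card_pos.mpr ⟨u, hu⟩
    omega
  -- m divides |S|
  have hdvdS : m ∣ S.card := by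
    have h1 : m ∣ S.card * (n + 1) := Dvd.dvd.mul_left hmod _
    have h2 : S.card * (n + 1) = L.card * m + S.card := by
      rw [Nat.mul_add, hcount]; ring
    have : S.card = S.card * (n + 1) - L.card * m := by omega
    rw [this]
    exact Nat.dvd_sub h1 ⟨L.card, by ring⟩
  -- improved bound : (n+1)*(m-1) ≤ |S|
  have hmain : (n + 1) * (m - 1) ≤ S.card := by
    by_contra hlt
    push_neg at hlt
    have hd2 : m ∣ (n + 1) * (m - 1) := Dvd.dvd.mul_right hmod _
    have hsub : m ∣ (n + 1) * (m - 1) - S.card := Nat.dvd_sub hd2 hdvdS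
    have hge : m ≤ (n + 1) * (m - 1) - S.card := Nat.le_of_dvd (by omega) hsub
    have hexp : (n + 1) * (m - 1) = n * (m - 1) + (m - 1) := by ring
    omega
  -- conclude
  have key : (S.card + L.card) * m = S.card * (n + m) := by
    rw [Nat.add_mul, ← hcount]; ring
  rw [key]
  calc (n + m) * (n + 1) * (m - 1) = ((n + 1) * (m - 1)) * (n + m) := by ring
    _ ≤ S.card * (n + m) := Nat.mul_le_mul_right _ hmain
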